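/- Let ρ : ℝ^d → [0,∞) satisfy ρ(x) ≤ C(1+|x|²)^{−(d+2+ε)/2} for some C, ε > 0, and let P̄ = ρ·dx. Then the map S^d → L¹(√(1+|x|²)·P̄), (w,b) ↦ 1_{\{x : wᵀx+b>0\}} is Lipschitz continuous, i.e., there is L > 0 with ∫ |1_{\{wᵀx+b>0\}} − 1_{\{w̃ᵀx+b̃>0\}}|·√(1+|x|²)·ρ(x) dx ≤ L(|w−w̃| + |b−b̃|) for all (w,b),(w̃,b̃) ∈ S^d. -/

import Mathlib

open MeasureTheory Real Set ENNReal

namespace HSLip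

lemma rpow_anti {x y A : ℝ} (hx : 0 < x) (hxy : x ≤ y) (hA : 0 ≤ A) : y ^ (-A) ≤ x ^ (-A) := by
  rw [Real.rpow_neg (by linarith), Real.rpow_neg hx.le]
  exact inv_anti₀ (Real.rpow_pos_of_pos hx _) (Real.rpow_le_rpow hx.le hxy hA)

lemma interp {u v A B : ℝ} (hu : 0 ≤ u) (hv : 0 ≤ v) (hA : 0 ≤ A) (hB : 0 ≤ B) :
    (1+(u+v)) ^ (-(A+B)) ≤ (1+u) ^ (-A) * (1+v) ^ (-B) := by
  have h1 : (0:ℝ) < 1+u := by linarith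
  have h2 : (0:ℝ) < 1+v := by linarith
  have h3 : (0:ℝ) < 1+(u+v) := by linarith
  rw [Real.rpow_neg h1.le, Real.rpow_neg h2.le, Real.rpow_neg h3.le, ← mul_inv]
  apply inv_anti₀ (by positivity)
  calc (1+u)^A * (1+v)^B
      ≤ (1+(u+v))^A * (1+(u+v))^B := by
        apply mul_le_mul (Real.rpow_le_rpow h1.le (by linarith) hA)
          (Real.rpow_le_rpow h2.le (by linarith) hB) (by positivity) (by positivity)
    _ = (1+(u+v))^(A+B) := (Real.rpow_add h3 _ _).symm


lemma lint_fin {E : Type*} [NormedAddCommGroup E] [NormedSpace ℝ E] [FiniteDimensional ℝ E]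
    [MeasureSpace E] [BorelSpace E] [(volume : Measure E).IsAddHaarMeasure] {r : ℝ}
    (hr : (Module.finrank ℝ E : ℝ) < r) :
    ∫⁻ x : E, ENNReal.ofReal ((1+‖x‖^2) ^ (-r/2)) < ∞ :=
  (integrable_rpow_neg_one_add_norm_sq (μ := volume) hr).lintegral_lt_top

lemma aux_inv {a A : ℝ} (ha : 0 < a) (hA : 1/2 ≤ A) : (1+a^2) ^ (-A) ≤ a⁻¹ := by
  have h1 : (1+a^2:ℝ) ^ (-A) ≤ (1+a^2) ^ (-(1/2:ℝ)) :=
    Real.rpow_le_rpow_of_exponent_le (by nlinarith) (by linarith)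
  have h2 : (1+a^2:ℝ) ^ (-(1/2:ℝ)) ≤ (a^2) ^ (-(1/2:ℝ)) :=
    rpow_anti (by positivity) (by linarith) (by norm_num)
  have h3 : (a^2:ℝ) ^ (-(1/2:ℝ)) = a⁻¹ := by
    rw [← Real.rpow_natCast a 2, ← Real.rpow_mul ha.le]
    norm_num [Real.rpow_neg_one]
  linarith

lemma aux_inv_sq {a A : ℝ} (ha : 0 < a) (hA : 1 ≤ A) : (1+a^2) ^ (-A) ≤ (a⁻¹)^2 := by
  have h1 : (1+a^2:ℝ) ^ (-A) ≤ (1+a^2) ^ (-(1:ℝ)) :=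
    Real.rpow_le_rpow_of_exponent_le (by nlinarith) (by linarith)
  have h2 : (1+a^2:ℝ) ^ (-(1:ℝ)) ≤ (a^2) ^ (-(1:ℝ)) :=
    rpow_anti (by positivity) (by linarith) (by norm_num)
  have h3 : (a^2:ℝ) ^ (-(1:ℝ)) = (a⁻¹)^2 := by
    rw [Real.rpow_neg_one, inv_pow]
  linarith

lemma icc_bound {M s b : ℝ} (hs0 : 0 < s) (v : ℝ≥0∞)
    (f : ℝ → ℝ≥0∞) (hf : ∀ t, f t ≤ (Set.Icc ((-M-b)/s) ((M-b)/s)).indicator (fun _ => v) t) :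
    ∫⁻ t, f t ≤ v * ENNReal.ofReal (2*M/s) := by
  calc ∫⁻ t, f t ≤ ∫⁻ t, (Set.Icc ((-M-b)/s) ((M-b)/s)).indicator (fun _ => v) t :=
        lintegral_mono hf
    _ = v * volume (Set.Icc ((-M-b)/s) ((M-b)/s)) := lintegral_indicator_const measurableSet_Icc v
    _ = v * ENNReal.ofReal (2*M/s) := by
        rw [Real.volume_Icc]
        congr 1
        rw [div_sub_div_same]
        ring_nf


noncomputable def W2 (d : ℕ) (ε q : ℝ) : ℝ := (1+q^2) ^ (-(((d:ℝ)+ε/2)/2))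

noncomputable def W2' (d : ℕ) (ε q : ℝ) : ℝ := (1+q^2) ^ (-(((d:ℝ)-1+ε/2)/2))

noncomputable def secF (d : ℕ) (ε s b δ q : ℝ) (t : ℝ) : ℝ≥0∞ :=
  if |s*t+b| ≤ δ*(1+(|t|+q)) then
    ENNReal.ofReal ((1+(t^2+q^2)) ^ (-(((d:ℝ)+1+ε)/2))) else 0

lemma W2_nonneg (d : ℕ) (ε q : ℝ) : 0 ≤ W2 d ε q :=
  Real.rpow_nonneg (by positivity) _

lemma W2'_nonneg (d : ℕ) (ε q : ℝ) : 0 ≤ W2' d ε q :=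
  Real.rpow_nonneg (by positivity) _

lemma W2_le_W2' (d : ℕ) (ε q : ℝ) : W2 d ε q ≤ W2' d ε q :=
  Real.rpow_le_rpow_of_exponent_le (by nlinarith [sq_nonneg q]) (by linarith)

lemma qW_bound (d : ℕ) {q : ℝ} (ε : ℝ) (hq : 0 ≤ q) :
    (1+q) * W2 d ε q ≤ 2 * W2' d ε q := by
  have h1q2 : (0:ℝ) < 1+q^2 := by positivity
  have h2q : 1+q ≤ 2 * Real.sqrt (1+q^2) := by
    have h := Real.sqrt_le_sqrt (show ((1+q)/2)^2 ≤ 1+q^2 by nlinarith)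
    rw [Real.sqrt_sq (by linarith)] at h
    linarith
  calc (1+q) * W2 d ε q ≤ (2*Real.sqrt (1+q^2)) * W2 d ε q :=
        mul_le_mul_of_nonneg_right h2q (W2_nonneg d ε q)
    _ = 2 * ((1+q^2) ^ ((1:ℝ)/2) * (1+q^2) ^ (-(((d:ℝ)+ε/2)/2))) := by
        rw [Real.sqrt_eq_rpow, W2]; ring
    _ = 2 * (1+q^2) ^ ((1:ℝ)/2 + -(((d:ℝ)+ε/2)/2)) := by rw [← Real.rpow_add h1q2]
    _ = 2 * W2' d ε q := by
        rw [show (1:ℝ)/2 + -(((d:ℝ)+ε/2)/2) = -(((d:ℝ)-1+ε/2)/2) by ring, W2']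

lemma split₁ (d : ℕ) {ε : ℝ} (hε : 0 < ε) (t q : ℝ) :
    (1+(t^2+q^2)) ^ (-(((d:ℝ)+1+ε)/2)) ≤ (1+t^2) ^ (-((1+ε/2)/2)) * W2 d ε q := by
  have h := interp (sq_nonneg t) (sq_nonneg q)
    (show (0:ℝ) ≤ (1+ε/2)/2 by linarith) (show (0:ℝ) ≤ ((d:ℝ)+ε/2)/2 by positivity)
  rw [W2]
  rwa [show (1+ε/2)/2 + ((d:ℝ)+ε/2)/2 = ((d:ℝ)+1+ε)/2 by ring] at h

lemma split₂ (d : ℕ) (hd : 1 ≤ d) {ε : ℝ} (hε : 0 < ε) (t q : ℝ) :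
    (1+(t^2+q^2)) ^ (-(((d:ℝ)+1+ε)/2)) ≤ (1+t^2) ^ (-((2+ε/2)/2)) * W2' d ε q := by
  have hd1 : (1:ℝ) ≤ (d:ℝ) := by exact_mod_cast hd
  have h := interp (sq_nonneg t) (sq_nonneg q)
    (show (0:ℝ) ≤ (2+ε/2)/2 by linarith) (show (0:ℝ) ≤ ((d:ℝ)-1+ε/2)/2 by linarith)
  rw [W2']
  rwa [show (2+ε/2)/2 + ((d:ℝ)-1+ε/2)/2 = ((d:ℝ)+1+ε)/2 by ring] at h

lemma habs_lower {s b δ q t : ℝ} (hs0 : 0 < s) (ht : |s*t+b| ≤ δ*(1+(|t|+q))) :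
    |b| ≤ δ*(1+q) + δ*|t| + s*|t| := by
  have h1 : |b| ≤ |s*t+b| + |s*t| := by
    calc |b| = |(s*t+b) + (-(s*t))| := by congr 1; ring
      _ ≤ |s*t+b| + |(-(s*t))| := abs_add_le _ _
      _ = |s*t+b| + |s*t| := by rw [abs_neg]
  have h2 : |s*t| = s*|t| := by rw [abs_mul, abs_of_pos hs0]
  nlinarith
  
lemma habs_upper {s b δ q t : ℝ} (hs0 : 0 < s) (ht : |s*t+b| ≤ δ*(1+(|t|+q))) :
    s*|t| ≤ δ*(1+q) + δ*|t| + |b| := by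
  have h2 : |s*t| = s*|t| := by rw [abs_mul, abs_of_pos hs0]
  have h1 : s*|t| ≤ |s*t+b| + |b| := by
    calc s*|t| = |s*t| := h2.symm
      _ = |(s*t+b) + (-b)| := by congr 1; ring
      _ ≤ |s*t+b| + |(-b)| := abs_add_le _ _
      _ = |s*t+b| + |b| := by rw [abs_neg]
  nlinarith

lemma mem_Icc_of {T s b δ q t : ℝ} (hs0 : 0 < s) (hδ : 0 ≤ δ)
    (ht : |s*t+b| ≤ δ*(1+(|t|+q))) (hT : |t| ≤ T) :
    t ∈ Set.Icc ((-(δ*(1+q)+δ*T)-b)/s) (((δ*(1+q)+δ*T)-b)/s) := by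
  have hM : |s*t+b| ≤ δ*(1+q)+δ*T := by
    have h0 : δ*(1+(|t|+q)) = δ*(1+q) + δ*|t| := by ring
    nlinarith [mul_le_mul_of_nonneg_left hT hδ]
  have h5 := abs_le.mp hM
  constructor
  · rw [div_le_iff₀ hs0]; nlinarith [h5.1]
  · rw [le_div_iff₀ hs0]; nlinarith [h5.2]

set_option maxHeartbeats 1000000 in
lemma caseA (d : ℕ) {ε s b δ q : ℝ} (hε : 0 < ε) (hδ : 0 < δ) (hδ5 : δ ≤ 1/5)
    (hb1 : |b| ≤ 1) (hq : 0 ≤ q) (hshalf : 1/2 ≤ s) :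
    ∫⁻ t : ℝ, secF d ε s b δ q t ≤ ENNReal.ofReal ((28*δ) * W2' d ε q) := by
  have hs0 : (0:ℝ) < s := by linarith
  set T : ℝ := 10/3 + (10/3)*(δ*(1+q)) with hTdef
  have hval : ∀ t : ℝ, (1+(t^2+q^2)) ^ (-(((d:ℝ)+1+ε)/2)) ≤ W2 d ε q := by
    intro t
    have h2 : (1+t^2:ℝ) ^ (-((1+ε/2)/2)) ≤ 1 :=
      Real.rpow_le_one_of_one_le_of_nonpos (by nlinarith) (by linarith)
    calc (1+(t^2+q^2)) ^ (-(((d:ℝ)+1+ε)/2)) ≤ (1+t^2) ^ (-((1+ε/2)/2)) * W2 d ε q := split₁ d hε t q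
      _ ≤ 1 * W2 d ε q := mul_le_mul_of_nonneg_right h2 (W2_nonneg d ε q)
      _ = W2 d ε q := one_mul _
  have hbound := icc_bound (M := δ*(1+q)+δ*T) (b := b) hs0 (ENNReal.ofReal (W2 d ε q))
    (secF d ε s b δ q)
    (by
      intro t
      rw [secF]
      by_cases hc : |s*t+b| ≤ δ*(1+(|t|+q))
      · have hT : |t| ≤ T := by
          have h1 := habs_upper hs0 hc
          rw [hTdef]
          nlinarith [abs_nonneg t,
            mul_le_mul_of_nonneg_right hδ5 (abs_nonneg t),
            mul_le_mul_of_nonneg_right hshalf (abs_nonneg t)]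
        rw [if_pos hc, Set.indicator_of_mem (mem_Icc_of hs0 hδ.le hc hT)]
        exact ENNReal.ofReal_le_ofReal (hval t)
      · rw [if_neg hc]; exact zero_le)
  refine le_trans hbound ?_
  rw [← ENNReal.ofReal_mul (W2_nonneg d ε q)]
  apply ENNReal.ofReal_le_ofReal
  set D : ℝ := δ*(1+q) with hDdef
  have hD0 : 0 < D := by rw [hDdef]; positivity
  have hM0 : (0:ℝ) ≤ D + δ*T := by positivity
  have h1 : 2*(D+δ*T)/s ≤ 4*(D+δ*T) := by
    rw [div_le_iff₀ hs0]
    nlinarith [mul_nonneg hM0 (show (0:ℝ) ≤ 2*s-1 by linarith)]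
  have hDd : δ*D ≤ D/5 := by nlinarith
  have h2 : 4*(D+δ*T) ≤ 7*D + 14*δ := by
    rw [hTdef]; nlinarith
  have h3 : W2 d ε q * (2*(D+δ*T)/s) ≤ W2 d ε q * (7*D+14*δ) :=
    mul_le_mul_of_nonneg_left (h1.trans h2) (W2_nonneg d ε q)
  have h4 : W2 d ε q * (7*D+14*δ) = 7*δ*((1+q)*W2 d ε q) + 14*δ*W2 d ε q := by
    rw [hDdef]; ring
  have h5 : 7*δ*((1+q)*W2 d ε q) ≤ 7*δ*(2*W2' d ε q) :=
    mul_le_mul_of_nonneg_left (qW_bound d ε hq) (by positivity)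
  have h6 : 14*δ*W2 d ε q ≤ 14*δ*W2' d ε q :=
    mul_le_mul_of_nonneg_left (W2_le_W2' d ε q) (by positivity)
  nlinarith

set_option maxHeartbeats 1000000 in
lemma caseB (d : ℕ) (hd : 1 ≤ d) {ε s b δ q : ℝ} (hε : 0 < ε) (hδ : 0 < δ) (hδ5 : δ ≤ 1/5)
    (hs : 4*δ ≤ s) (hs1 : s ≤ 1) (hb1 : |b| ≤ 1) (hq : 0 ≤ q)
    (hbl : 1/2 ≤ |b|) (hDb : δ*(1+q) ≤ |b|/2) :
    ∫⁻ t : ℝ, secF d ε s b δ q t ≤ ENNReal.ofReal ((288*δ) * W2' d ε q) := by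
  have hs0 : (0:ℝ) < s := by linarith
  have hδs : δ ≤ s/4 := by linarith
  set D : ℝ := δ*(1+q) with hDdef
  have hD0 : 0 < D := by rw [hDdef]; positivity
  set a₀ : ℝ := (|b|-D)/(s+δ) with ha₀def
  have ha₀pos : 0 < a₀ := by
    rw [ha₀def]; exact div_pos (by linarith) (by linarith)
  have ha₀le : ∀ t : ℝ, |s*t+b| ≤ δ*(1+(|t|+q)) → a₀ ≤ |t| := by
    intro t ht
    have h1 := habs_lower hs0 ht
    rw [ha₀def, div_le_iff₀ (by linarith : (0:ℝ) < s+δ)]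
    nlinarith [abs_nonneg t]
  have ha₀s : 1/(8*s) ≤ a₀ := by
    rw [ha₀def, div_le_div_iff₀ (by positivity) (by linarith)]
    nlinarith [hs0.le]
  have ha₀inv : a₀⁻¹ ≤ 8*s := by
    have h := inv_anti₀ (by positivity : (0:ℝ) < 1/(8*s)) ha₀s
    rwa [one_div, inv_inv] at h
  have hval₁ : ∀ t : ℝ, |s*t+b| ≤ δ*(1+(|t|+q)) →
      (1+(t^2+q^2)) ^ (-(((d:ℝ)+1+ε)/2)) ≤ 8*s*W2 d ε q := by
    intro t ht
    have hat := ha₀le t ht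
    have hsq : 1+a₀^2 ≤ 1+t^2 := by nlinarith [sq_abs t, abs_nonneg t]
    have h2 : (1+t^2:ℝ) ^ (-((1+ε/2)/2)) ≤ (1+a₀^2) ^ (-((1+ε/2)/2)) :=
      rpow_anti (by positivity) hsq (by linarith)
    have h3 : (1+a₀^2:ℝ) ^ (-((1+ε/2)/2)) ≤ a₀⁻¹ := aux_inv ha₀pos (by linarith)
    calc (1+(t^2+q^2)) ^ (-(((d:ℝ)+1+ε)/2)) ≤ (1+t^2) ^ (-((1+ε/2)/2)) * W2 d ε q :=
          split₁ d hε t q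
      _ ≤ (8*s) * W2 d ε q := mul_le_mul_of_nonneg_right (by linarith) (W2_nonneg d ε q)
      _ = 8*s*W2 d ε q := by ring
  have hval₂ : ∀ t : ℝ, |s*t+b| ≤ δ*(1+(|t|+q)) →
      (1+(t^2+q^2)) ^ (-(((d:ℝ)+1+ε)/2)) ≤ 64*s^2*W2' d ε q := by
    intro t ht
    have hat := ha₀le t ht
    have hsq : 1+a₀^2 ≤ 1+t^2 := by nlinarith [sq_abs t, abs_nonneg t]
    have h2 : (1+t^2:ℝ) ^ (-((2+ε/2)/2)) ≤ (1+a₀^2) ^ (-((2+ε/2)/2)) :=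
      rpow_anti (by positivity) hsq (by linarith)
    have h3 : (1+a₀^2:ℝ) ^ (-((2+ε/2)/2)) ≤ (a₀⁻¹)^2 := aux_inv_sq ha₀pos (by linarith)
    have h4 : (a₀⁻¹)^2 ≤ (8*s)^2 := by nlinarith [inv_nonneg.mpr ha₀pos.le]
    calc (1+(t^2+q^2)) ^ (-(((d:ℝ)+1+ε)/2)) ≤ (1+t^2) ^ (-((2+ε/2)/2)) * W2' d ε q :=
          split₂ d hd hε t q
      _ ≤ (64*s^2) * W2' d ε q := by
          apply mul_le_mul_of_nonneg_right _ (W2'_nonneg d ε q)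
          nlinarith
      _ = 64*s^2*W2' d ε q := by ring
  have hbound := icc_bound (M := D+δ*(2/s)) (b := b) hs0
    (min (ENNReal.ofReal (8*s*W2 d ε q)) (ENNReal.ofReal (64*s^2*W2' d ε q)))
    (secF d ε s b δ q)
    (by
      intro t
      rw [secF]
      by_cases hc : |s*t+b| ≤ δ*(1+(|t|+q))
      · have hT : |t| ≤ 2/s := by
          have h1 := habs_upper hs0 hc
          rw [le_div_iff₀ hs0]
          nlinarith [abs_nonneg t,
            mul_le_mul_of_nonneg_right (show δ ≤ s/4 by linarith) (abs_nonneg t)]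
        rw [if_pos hc, Set.indicator_of_mem (by
          have := mem_Icc_of hs0 hδ.le hc hT
          rwa [← hDdef] at this)]
        exact le_min (ENNReal.ofReal_le_ofReal (hval₁ t hc))
          (ENNReal.ofReal_le_ofReal (hval₂ t hc))
      · rw [if_neg hc]; exact zero_le)
  refine le_trans hbound ?_
  have hMs : 2*(D+δ*(2/s))/s = 2*D/s + 4*δ/s^2 := by field_simp; ring
  rw [hMs, ENNReal.ofReal_add (by positivity) (by positivity), mul_add]
  have hterm1 : min (ENNReal.ofReal (8*s*W2 d ε q)) (ENNReal.ofReal (64*s^2*W2' d ε q))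
        * ENNReal.ofReal (2*D/s) ≤ ENNReal.ofReal (16*D*W2 d ε q) := by
    refine le_trans (mul_le_mul_left (min_le_left _ _) _) ?_
    rw [← ENNReal.ofReal_mul (mul_nonneg (by positivity) (W2_nonneg d ε q))]
    apply ENNReal.ofReal_le_ofReal
    have h : 8*s*W2 d ε q * (2*D/s) = 16*D*W2 d ε q := by field_simp; ring
    linarith
  have hterm2 : min (ENNReal.ofReal (8*s*W2 d ε q)) (ENNReal.ofReal (64*s^2*W2' d ε q))
        * ENNReal.ofReal (4*δ/s^2) ≤ ENNReal.ofReal (256*δ*W2' d ε q) := by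
    refine le_trans (mul_le_mul_left (min_le_right _ _) _) ?_
    rw [← ENNReal.ofReal_mul (mul_nonneg (by positivity) (W2'_nonneg d ε q))]
    apply ENNReal.ofReal_le_ofReal
    have h : 64*s^2*W2' d ε q * (4*δ/s^2) = 256*δ*W2' d ε q := by field_simp; ring
    linarith
  calc _ ≤ ENNReal.ofReal (16*D*W2 d ε q) + ENNReal.ofReal (256*δ*W2' d ε q) :=
        add_le_add hterm1 hterm2
    _ = ENNReal.ofReal (16*D*W2 d ε q + 256*δ*W2' d ε q) :=
        (ENNReal.ofReal_add (mul_nonneg (by positivity) (W2_nonneg d ε q))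
          (mul_nonneg (by positivity) (W2'_nonneg d ε q))).symm
    _ ≤ ENNReal.ofReal ((288*δ) * W2' d ε q) := by
        apply ENNReal.ofReal_le_ofReal
        have e1 : 16*D*W2 d ε q = 16*δ*((1+q)*W2 d ε q) := by rw [hDdef]; ring
        have e2 : 16*δ*((1+q)*W2 d ε q) ≤ 16*δ*(2*W2' d ε q) :=
          mul_le_mul_of_nonneg_left (qW_bound d ε hq) (by positivity)
        nlinarith

set_option maxHeartbeats 1000000 in
lemma caseC (d : ℕ) {ε s b δ q C₁ : ℝ} (hε : 0 < ε) (hC₁0 : 0 ≤ C₁)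
    (hC₁ : ∫⁻ t : ℝ, ENNReal.ofReal ((1+t^2) ^ (-((1+ε/2)/2))) ≤ ENNReal.ofReal C₁)
    (hδ : 0 < δ) (hδ5 : δ ≤ 1/5) (hq : 0 ≤ q)
    (hbl : 1/2 ≤ |b|) (hDb : |b|/2 < δ*(1+q)) :
    ∫⁻ t : ℝ, secF d ε s b δ q t ≤ ENNReal.ofReal ((40*C₁*δ) * W2' d ε q) := by
  have hq20 : 1 ≤ 20*δ*q := by nlinarith
  have hpt : ∀ t : ℝ, secF d ε s b δ q t
      ≤ ENNReal.ofReal (20*δ*q*W2 d ε q) * ENNReal.ofReal ((1+t^2) ^ (-((1+ε/2)/2))) := by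
    intro t
    rw [secF]
    by_cases hc : |s*t+b| ≤ δ*(1+(|t|+q))
    · rw [if_pos hc, ← ENNReal.ofReal_mul (mul_nonneg (by positivity) (W2_nonneg d ε q))]
      apply ENNReal.ofReal_le_ofReal
      calc (1+(t^2+q^2)) ^ (-(((d:ℝ)+1+ε)/2)) ≤ (1+t^2) ^ (-((1+ε/2)/2)) * W2 d ε q :=
            split₁ d hε t q
        _ ≤ (20*δ*q) * ((1+t^2) ^ (-((1+ε/2)/2)) * W2 d ε q) := by
            apply le_mul_of_one_le_left _ hq20
            exact mul_nonneg (Real.rpow_nonneg (by positivity) _) (W2_nonneg d ε q)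
        _ = 20*δ*q*W2 d ε q * ((1+t^2) ^ (-((1+ε/2)/2))) := by ring
    · rw [if_neg hc]; exact zero_le
  refine le_trans (lintegral_mono hpt) ?_
  calc ∫⁻ t : ℝ, ENNReal.ofReal (20*δ*q*W2 d ε q) * ENNReal.ofReal ((1+t^2) ^ (-((1+ε/2)/2)))
      = ENNReal.ofReal (20*δ*q*W2 d ε q) * ∫⁻ t : ℝ, ENNReal.ofReal ((1+t^2) ^ (-((1+ε/2)/2))) :=
        lintegral_const_mul' _ _ ENNReal.ofReal_ne_top
    _ ≤ ENNReal.ofReal (20*δ*q*W2 d ε q) * ENNReal.ofReal C₁ := mul_le_mul_right hC₁ _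
    _ = ENNReal.ofReal (20*δ*q*W2 d ε q*C₁) := by
        rw [← ENNReal.ofReal_mul (mul_nonneg (by positivity) (W2_nonneg d ε q))]
    _ ≤ ENNReal.ofReal ((40*C₁*δ) * W2' d ε q) := by
        apply ENNReal.ofReal_le_ofReal
        have h1 : q*W2 d ε q ≤ 2*W2' d ε q :=
          le_trans (by nlinarith [W2_nonneg d ε q]) (qW_bound d ε hq)
        nlinarith [mul_le_mul_of_nonneg_left h1
          (mul_nonneg (show (0:ℝ) ≤ 20*δ by positivity) hC₁0)]

set_option maxHeartbeats 1000000 in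
lemma sectionT (d : ℕ) (hd : 1 ≤ d) {ε : ℝ} (hε : 0 < ε) {C₁ : ℝ} (hC₁0 : 0 ≤ C₁)
    (hC₁ : ∫⁻ t : ℝ, ENNReal.ofReal ((1+t^2) ^ (-((1+ε/2)/2))) ≤ ENNReal.ofReal C₁)
    {s b δ q : ℝ} (hδ : 0 < δ) (hδ5 : δ ≤ 1/5) (hs : 4*δ ≤ s) (hsb : s^2 + b^2 = 1)
    (hq : 0 ≤ q) :
    ∫⁻ t : ℝ, secF d ε s b δ q t
      ≤ ENNReal.ofReal (δ * (300*(1+C₁)) * W2' d ε q) := by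
  have hs0 : 0 < s := by linarith
  have hs1 : s ≤ 1 := by nlinarith [sq_nonneg b]
  have hb1 : |b| ≤ 1 := abs_le.mpr ⟨by nlinarith, by nlinarith⟩
  have hW := W2'_nonneg d ε q
  have final : ∀ c : ℝ, 0 ≤ c → c ≤ 300*(1+C₁) →
      ENNReal.ofReal (c * δ * W2' d ε q) ≤ ENNReal.ofReal (δ * (300*(1+C₁)) * W2' d ε q) := by
    intro c hc0 hc
    apply ENNReal.ofReal_le_ofReal
    nlinarith [mul_nonneg hδ.le hW]
  rcases lt_or_ge |b| (1/2) with hbs | hbl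
  · have hshalf : 1/2 ≤ s := by nlinarith [sq_abs b, abs_nonneg b]
    refine le_trans (caseA d hε hδ hδ5 hb1 hq hshalf) ?_
    exact final 28 (by norm_num) (by nlinarith)
  · rcases le_or_gt (δ*(1+q)) (|b|/2) with hDb | hDb
    · refine le_trans (caseB d hd hε hδ hδ5 hs hs1 hb1 hq hbl hDb) ?_
      exact final 288 (by norm_num) (by nlinarith)
    · refine le_trans (caseC d hε hC₁0 hC₁ hδ hδ5 hq hbl hDb) ?_
      exact final (40*C₁) (by positivity) (by nlinarith)

set_option maxHeartbeats 1000000 in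
lemma bigcase (d : ℕ) (hd : 1 ≤ d) {ε : ℝ} (hε : 0 < ε) :
    ∃ K : ℝ, 0 < K ∧ ∀ (w : EuclideanSpace ℝ (Fin d)) (b δ : ℝ),
      ‖w‖^2 + b^2 = 1 → 0 < δ → δ ≤ 1/5 → 4*δ ≤ ‖w‖ →
      ∫⁻ x, (if |(inner ℝ w x : ℝ) + b| ≤ δ*(1+‖x‖) then
          ENNReal.ofReal ((1+‖x‖^2) ^ (-(((d:ℝ)+1+ε)/2))) else 0) ≤ ENNReal.ofReal (K * δ) := by
  obtain ⟨d', rfl⟩ : ∃ d', d = d'+1 := ⟨d-1, (Nat.succ_pred_eq_of_pos hd).symm⟩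
  -- the one-dimensional constant
  have hC1fin : ∫⁻ t : ℝ, ENNReal.ofReal ((1+t^2) ^ (-((1+ε/2)/2))) < ∞ := by
    have h1 := lint_fin (E := ℝ) (r := 1+ε/2) (by simp; linarith)
    have : ∀ t : ℝ, ENNReal.ofReal ((1+t^2) ^ (-((1+ε/2)/2)))
        = ENNReal.ofReal ((1+‖t‖^2) ^ (-(1+ε/2)/2)) := by
      intro t; rw [Real.norm_eq_abs, sq_abs, neg_div]
    simpa [this] using h1
  set C₁ : ℝ := (∫⁻ t : ℝ, ENNReal.ofReal ((1+t^2) ^ (-((1+ε/2)/2)))).toReal with hC₁def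
  have hC₁0 : 0 ≤ C₁ := ENNReal.toReal_nonneg
  have hC₁ : ∫⁻ t : ℝ, ENNReal.ofReal ((1+t^2) ^ (-((1+ε/2)/2))) ≤ ENNReal.ofReal C₁ := by
    rw [hC₁def, ENNReal.ofReal_toReal hC1fin.ne]
  -- the outer integral constant
  have hJfin : ∫⁻ y : EuclideanSpace ℝ (Fin d'),
      ENNReal.ofReal ((1+‖y‖^2) ^ (-(((d':ℝ)+ε/2)/2))) < ∞ := by
    have h1 := lint_fin (E := EuclideanSpace ℝ (Fin d')) (r := (d':ℝ)+ε/2)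
      (by rw [finrank_euclideanSpace_fin]; linarith)
    have : ∀ y : EuclideanSpace ℝ (Fin d'), ENNReal.ofReal ((1+‖y‖^2) ^ (-(((d':ℝ)+ε/2)/2)))
        = ENNReal.ofReal ((1+‖y‖^2) ^ (-((d':ℝ)+ε/2)/2)) := by
      intro y; rw [neg_div]
    simpa [this] using h1
  set J : ℝ≥0∞ := ∫⁻ y : EuclideanSpace ℝ (Fin d'),
      ENNReal.ofReal ((1+‖y‖^2) ^ (-(((d':ℝ)+ε/2)/2))) with hJdef
  refine ⟨300*(1+C₁) * (J.toReal + 1), by positivity, ?_⟩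
  intro w b δ hsb hδ hδ5 hs
  have hs0 : (0:ℝ) < ‖w‖ := by linarith
  -- rotation
  set u : EuclideanSpace ℝ (Fin (d'+1)) := ‖w‖⁻¹ • w with hudef
  have hu : ‖u‖ = 1 := by
    rw [hudef, norm_smul, norm_inv, norm_norm, inv_mul_cancel₀ hs0.ne']
  set e₀ : EuclideanSpace ℝ (Fin (d'+1)) := EuclideanSpace.single 0 1 with he₀def
  have he₀ : ‖e₀‖ = 1 := by rw [he₀def, EuclideanSpace.norm_single]; norm_num
  set U := Submodule.reflection (ℝ ∙ (e₀ - u))ᗮ with hUdef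
  have hUe₀ : U e₀ = u := Submodule.reflection_sub (by rw [he₀, hu])
  have hinner : ∀ x : EuclideanSpace ℝ (Fin (d'+1)), (inner ℝ w (U x) : ℝ) = ‖w‖ * x 0 := by
    intro x
    have hww : (‖w‖ : ℝ) • u = w := by
      rw [hudef, smul_smul, mul_inv_cancel₀ hs0.ne', one_smul]
    calc (inner ℝ w (U x) : ℝ) = inner ℝ ((‖w‖:ℝ) • u) (U x) := by rw [hww]
      _ = ‖w‖ * inner ℝ u (U x) := real_inner_smul_left _ _ _
      _ = ‖w‖ * (inner ℝ (U e₀) (U x) : ℝ) := by rw [hUe₀]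
      _ = ‖w‖ * (inner ℝ e₀ x : ℝ) := by rw [LinearIsometryEquiv.inner_map_map]
      _ = ‖w‖ * x 0 := by rw [he₀def, EuclideanSpace.inner_single_left]; simp
  have step1 : ∫⁻ x, (if |(inner ℝ w x : ℝ) + b| ≤ δ*(1+‖x‖) then
          ENNReal.ofReal ((1+‖x‖^2) ^ (-(((((d'+1:ℕ)):ℝ)+1+ε)/2))) else 0)
      = ∫⁻ x : EuclideanSpace ℝ (Fin (d'+1)), (if |‖w‖ * x 0 + b| ≤ δ*(1+‖x‖) then
          ENNReal.ofReal ((1+‖x‖^2) ^ (-(((((d'+1:ℕ)):ℝ)+1+ε)/2))) else 0) := by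
    rw [← (U.measurePreserving).lintegral_comp_emb (U.toHomeomorph.measurableEmbedding)]
    apply lintegral_congr
    intro x
    rw [hinner x, U.norm_map]
  have step2 : ∫⁻ x : EuclideanSpace ℝ (Fin (d'+1)), (if |‖w‖ * x 0 + b| ≤ δ*(1+‖x‖) then
          ENNReal.ofReal ((1+‖x‖^2) ^ (-(((((d'+1:ℕ)):ℝ)+1+ε)/2))) else 0)
      = ∫⁻ z : (Fin (d'+1) → ℝ), (if |‖w‖ * z 0 + b| ≤ δ*(1+Real.sqrt (∑ i, (z i)^2)) then
          ENNReal.ofReal ((1+∑ i, (z i)^2) ^ (-(((((d'+1:ℕ)):ℝ)+1+ε)/2))) else 0) := by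
    rw [← ((EuclideanSpace.volume_preserving_symm_measurableEquiv_toLp (Fin (d'+1))).symm).lintegral_comp_emb
      (MeasurableEquiv.measurableEmbedding _)]
    apply lintegral_congr
    intro z
    have hz0 : ((MeasurableEquiv.toLp 2 (Fin (d'+1) → ℝ)).symm.symm z) 0 = z 0 := rfl
    have hzn : ‖(MeasurableEquiv.toLp 2 (Fin (d'+1) → ℝ)).symm.symm z‖
        = Real.sqrt (∑ i, (z i)^2) := by
      rw [EuclideanSpace.norm_eq]
      congr 1
      apply Finset.sum_congr rfl
      intro i _
      rw [Real.norm_eq_abs, sq_abs]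
      rfl
    have hzn2 : ‖(MeasurableEquiv.toLp 2 (Fin (d'+1) → ℝ)).symm.symm z‖^2 = ∑ i, (z i)^2 := by
      rw [hzn, Real.sq_sqrt (by positivity)]
    rw [hz0, hzn2, hzn]
  have step3 : ∫⁻ z : (Fin (d'+1) → ℝ), (if |‖w‖ * z 0 + b| ≤ δ*(1+Real.sqrt (∑ i, (z i)^2)) then
          ENNReal.ofReal ((1+∑ i, (z i)^2) ^ (-(((((d'+1:ℕ)):ℝ)+1+ε)/2))) else 0)
      = ∫⁻ pr : ℝ × (Fin d' → ℝ),
          (if |‖w‖ * pr.1 + b| ≤ δ*(1+Real.sqrt (pr.1^2 + ∑ j, (pr.2 j)^2)) then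
          ENNReal.ofReal ((1+(pr.1^2 + ∑ j, (pr.2 j)^2)) ^ (-(((((d'+1:ℕ)):ℝ)+1+ε)/2))) else 0) := by
    rw [← ((volume_preserving_piFinSuccAbove (fun _ : Fin (d'+1) => ℝ) 0).symm).lintegral_comp_emb
      (MeasurableEquiv.measurableEmbedding _)]
    apply lintegral_congr
    intro pr
    have h0 : (MeasurableEquiv.piFinSuccAbove (fun _ : Fin (d'+1) => ℝ) 0).symm pr 0 = pr.1 := by
      simp [MeasurableEquiv.piFinSuccAbove]
    have hsum : ∑ i, ((MeasurableEquiv.piFinSuccAbove (fun _ : Fin (d'+1) => ℝ) 0).symm pr i)^2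
        = pr.1^2 + ∑ j, (pr.2 j)^2 := by
      rw [Fin.sum_univ_succ, h0]
      simp [MeasurableEquiv.piFinSuccAbove]
    rw [h0, hsum]
  have hrelax : ∀ pr : ℝ × (Fin d' → ℝ),
      (if |‖w‖ * pr.1 + b| ≤ δ*(1+Real.sqrt (pr.1^2 + ∑ j, (pr.2 j)^2)) then
        ENNReal.ofReal ((1+(pr.1^2 + ∑ j, (pr.2 j)^2)) ^ (-(((((d'+1:ℕ)):ℝ)+1+ε)/2))) else 0)
      ≤ secF (d'+1) ε ‖w‖ b δ (Real.sqrt (∑ j, (pr.2 j)^2)) pr.1 := by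
    intro pr
    have hQ : (0:ℝ) ≤ ∑ j, (pr.2 j)^2 := by positivity
    have hq2 : Real.sqrt (∑ j, (pr.2 j)^2)^2 = ∑ j, (pr.2 j)^2 := Real.sq_sqrt hQ
    rw [secF]
    by_cases hc : |‖w‖ * pr.1 + b| ≤ δ*(1+Real.sqrt (pr.1^2 + ∑ j, (pr.2 j)^2))
    · have h1 : Real.sqrt (pr.1^2 + ∑ j, (pr.2 j)^2) ≤ |pr.1| + Real.sqrt (∑ j, (pr.2 j)^2) := by
        have h2 : pr.1^2 + ∑ j, (pr.2 j)^2
            ≤ (|pr.1| + Real.sqrt (∑ j, (pr.2 j)^2))^2 := by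
          nlinarith [abs_nonneg pr.1, Real.sqrt_nonneg (∑ j, (pr.2 j)^2), sq_abs pr.1]
        calc Real.sqrt (pr.1^2 + ∑ j, (pr.2 j)^2)
            ≤ Real.sqrt ((|pr.1| + Real.sqrt (∑ j, (pr.2 j)^2))^2) := Real.sqrt_le_sqrt h2
          _ = |pr.1| + Real.sqrt (∑ j, (pr.2 j)^2) := Real.sqrt_sq (by positivity)
      rw [if_pos hc, if_pos (by nlinarith : |‖w‖*pr.1+b| ≤ δ*(1+(|pr.1|+Real.sqrt (∑ j, (pr.2 j)^2)))), hq2]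
    · rw [if_neg hc]
      exact zero_le
  have hfun : (fun pr : ℝ × (Fin d' → ℝ) =>
        secF (d'+1) ε ‖w‖ b δ (Real.sqrt (∑ j, (pr.2 j)^2)) pr.1)
      = (fun pr : ℝ × (Fin d' → ℝ) =>
        if |‖w‖*pr.1+b| ≤ δ*(1+(|pr.1|+Real.sqrt (∑ j, (pr.2 j)^2))) then
          ENNReal.ofReal ((1+(pr.1^2+∑ j, (pr.2 j)^2)) ^ (-(((((d'+1:ℕ)):ℝ)+1+ε)/2))) else 0) := by
    funext pr
    rw [secF, Real.sq_sqrt (by positivity : (0:ℝ) ≤ ∑ j, (pr.2 j)^2)]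
  have hmeas : Measurable (fun pr : ℝ × (Fin d' → ℝ) =>
      secF (d'+1) ε ‖w‖ b δ (Real.sqrt (∑ j, (pr.2 j)^2)) pr.1) := by
    have hQm : Measurable (fun pr : ℝ × (Fin d' → ℝ) => ∑ j, (pr.2 j)^2) :=
      Finset.measurable_sum Finset.univ
        (fun j _ => ((measurable_pi_apply j).comp measurable_snd).pow_const 2)
    rw [hfun]
    apply Measurable.ite
    · apply measurableSet_le
      · exact ((measurable_fst.const_mul ‖w‖).add_const b).abs
      · exact (measurable_const.add (measurable_fst.abs.add hQm.sqrt)).const_mul δ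
    · have hcont : Continuous (fun pr : ℝ × (Fin d' → ℝ) => 1 + (pr.1^2 + ∑ j, (pr.2 j)^2)) := by
        apply continuous_const.add
        exact (continuous_fst.pow 2).add
          (continuous_finset_sum _ (fun j _ => ((continuous_apply j).comp continuous_snd).pow 2))
      exact ((hcont.rpow_const (fun x => Or.inl (by positivity))).measurable).ennreal_ofReal
    · exact measurable_const
  have hinnerb : ∀ y : Fin d' → ℝ, ∫⁻ t : ℝ, secF (d'+1) ε ‖w‖ b δ (Real.sqrt (∑ j, (y j)^2)) t
      ≤ ENNReal.ofReal (δ * (300*(1+C₁)))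
        * ENNReal.ofReal ((1+∑ j, (y j)^2) ^ (-(((d':ℝ)+ε/2)/2))) := by
    intro y
    have h := sectionT (d'+1) (Nat.le_add_left 1 d') hε hC₁0 hC₁ hδ hδ5 hs hsb
      (Real.sqrt_nonneg (∑ j, (y j)^2))
    refine le_trans h ?_
    apply le_of_eq
    rw [← ENNReal.ofReal_mul (by positivity)]
    congr 1
    congr 1
    rw [W2', Real.sq_sqrt (by positivity : (0:ℝ) ≤ ∑ j, (y j)^2)]
    congr 1
    push_cast
    ring
  have houterJ : ∫⁻ y : (Fin d' → ℝ),
      ENNReal.ofReal ((1+∑ j, (y j)^2) ^ (-(((d':ℝ)+ε/2)/2))) = J := by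
    rw [hJdef,
      ← ((EuclideanSpace.volume_preserving_symm_measurableEquiv_toLp (Fin d')).lintegral_comp_emb
        (MeasurableEquiv.measurableEmbedding _))]
    apply lintegral_congr
    intro y
    have hn2 : ‖y‖^2 = ∑ j, (((MeasurableEquiv.toLp 2 (Fin d' → ℝ)).symm y) j)^2 := by
      rw [EuclideanSpace.norm_eq, Real.sq_sqrt (by positivity)]
      apply Finset.sum_congr rfl
      intro i _
      rw [Real.norm_eq_abs, sq_abs]
      rfl
    rw [hn2]
  calc ∫⁻ x, (if |(inner ℝ w x : ℝ) + b| ≤ δ*(1+‖x‖) then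
          ENNReal.ofReal ((1+‖x‖^2) ^ (-(((((d'+1:ℕ)):ℝ)+1+ε)/2))) else 0)
      = ∫⁻ pr : ℝ × (Fin d' → ℝ),
          (if |‖w‖ * pr.1 + b| ≤ δ*(1+Real.sqrt (pr.1^2 + ∑ j, (pr.2 j)^2)) then
          ENNReal.ofReal ((1+(pr.1^2 + ∑ j, (pr.2 j)^2)) ^ (-(((((d'+1:ℕ)):ℝ)+1+ε)/2))) else 0) := by
        rw [step1, step2, step3]
    _ ≤ ∫⁻ pr : ℝ × (Fin d' → ℝ),
          secF (d'+1) ε ‖w‖ b δ (Real.sqrt (∑ j, (pr.2 j)^2)) pr.1 := lintegral_mono hrelax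
    _ = ∫⁻ y : Fin d' → ℝ, ∫⁻ t : ℝ,
          secF (d'+1) ε ‖w‖ b δ (Real.sqrt (∑ j, (y j)^2)) t := by
        rw [MeasureTheory.Measure.volume_eq_prod, MeasureTheory.lintegral_prod_symm _ hmeas.aemeasurable]
    _ ≤ ∫⁻ y : Fin d' → ℝ, ENNReal.ofReal (δ * (300*(1+C₁)))
          * ENNReal.ofReal ((1+∑ j, (y j)^2) ^ (-(((d':ℝ)+ε/2)/2))) := lintegral_mono hinnerb
    _ = ENNReal.ofReal (δ * (300*(1+C₁))) * J := by
        rw [lintegral_const_mul' _ _ ENNReal.ofReal_ne_top, houterJ]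
    _ ≤ ENNReal.ofReal (δ * (300*(1+C₁))) * ENNReal.ofReal (J.toReal) := by
        rw [ENNReal.ofReal_toReal hJfin.ne]
    _ ≤ ENNReal.ofReal (300*(1+C₁) * (J.toReal + 1) * δ) := by
        rw [← ENNReal.ofReal_mul (by positivity)]
        apply ENNReal.ofReal_le_ofReal
        nlinarith [ENNReal.toReal_nonneg (a := J)]

set_option maxHeartbeats 1000000 in
lemma key (d : ℕ) {ε : ℝ} (hε : 0 < ε) :
    ∃ K : ℝ, 0 < K ∧ ∀ (w : EuclideanSpace ℝ (Fin d)) (b δ : ℝ),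
      ‖w‖^2 + b^2 = 1 → 0 < δ →
      ∫⁻ x, (if |(inner ℝ w x : ℝ) + b| ≤ δ*(1+‖x‖) then
          ENNReal.ofReal ((1+‖x‖^2) ^ (-(((d:ℝ)+1+ε)/2))) else 0)
        ≤ ENNReal.ofReal (K * δ) := by
  have hmassfin : ∫⁻ x : EuclideanSpace ℝ (Fin d),
      ENNReal.ofReal ((1+‖x‖^2) ^ (-(((d:ℝ)+1+ε)/2))) < ∞ := by
    have h1 := lint_fin (E := EuclideanSpace ℝ (Fin d)) (r := (d:ℝ)+1+ε)
      (by rw [finrank_euclideanSpace_fin]; linarith)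
    have h2 : ∫⁻ x : EuclideanSpace ℝ (Fin d),
        ENNReal.ofReal ((1+‖x‖^2) ^ (-(((d:ℝ)+1+ε)/2)))
        = ∫⁻ x : EuclideanSpace ℝ (Fin d),
        ENNReal.ofReal ((1+‖x‖^2) ^ (-((d:ℝ)+1+ε)/2)) :=
      lintegral_congr fun x => by rw [neg_div]
    rw [h2]; exact h1
  have hJ4fin : ∫⁻ x : EuclideanSpace ℝ (Fin d),
      ENNReal.ofReal ((1+‖x‖^2) ^ (-(((d:ℝ)+ε)/2))) < ∞ := by
    have h1 := lint_fin (E := EuclideanSpace ℝ (Fin d)) (r := (d:ℝ)+ε)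
      (by rw [finrank_euclideanSpace_fin]; linarith)
    have h2 : ∫⁻ x : EuclideanSpace ℝ (Fin d),
        ENNReal.ofReal ((1+‖x‖^2) ^ (-(((d:ℝ)+ε)/2)))
        = ∫⁻ x : EuclideanSpace ℝ (Fin d),
        ENNReal.ofReal ((1+‖x‖^2) ^ (-((d:ℝ)+ε)/2)) :=
      lintegral_congr fun x => by rw [neg_div]
    rw [h2]; exact h1
  set mass : ℝ := (∫⁻ x : EuclideanSpace ℝ (Fin d),
      ENNReal.ofReal ((1+‖x‖^2) ^ (-(((d:ℝ)+1+ε)/2)))).toReal with hmassdef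
  set J4 : ℝ := (∫⁻ x : EuclideanSpace ℝ (Fin d),
      ENNReal.ofReal ((1+‖x‖^2) ^ (-(((d:ℝ)+ε)/2)))).toReal with hJ4def
  have hmass0 : 0 ≤ mass := ENNReal.toReal_nonneg
  have hJ40 : 0 ≤ J4 := ENNReal.toReal_nonneg
  -- the big-slope bound, valid in all dimensions
  have hbig : ∃ Kb : ℝ, 0 < Kb ∧ ∀ (w : EuclideanSpace ℝ (Fin d)) (b δ : ℝ),
      ‖w‖^2 + b^2 = 1 → 0 < δ → δ ≤ 1/5 → 4*δ ≤ ‖w‖ →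
      ∫⁻ x, (if |(inner ℝ w x : ℝ) + b| ≤ δ*(1+‖x‖) then
          ENNReal.ofReal ((1+‖x‖^2) ^ (-(((d:ℝ)+1+ε)/2))) else 0)
        ≤ ENNReal.ofReal (Kb * δ) := by
    rcases Nat.eq_zero_or_pos d with hd0 | hd1
    · refine ⟨1, one_pos, ?_⟩
      intro w b δ hsb hδ hδ5 hs
      exfalso
      have hw0 : ‖w‖ = 0 := by
        subst hd0
        rw [EuclideanSpace.norm_eq]
        simp
      rw [hw0] at hs
      linarith
    · exact bigcase d hd1 hε
  obtain ⟨Kb, hKb0, hKb⟩ := hbig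
  refine ⟨Kb + 5*(mass+1) + 13*(J4+1), by positivity, ?_⟩
  intro w b δ hsb hδ
  have hKbig : Kb ≤ Kb + 5*(mass+1) + 13*(J4+1) := by linarith
  rcases le_or_gt δ (1/5) with hδ5 | hδ5
  · rcases le_or_gt (4*δ) ‖w‖ with hbig4 | hsmall
    · refine le_trans (hKb w b δ hsb hδ hδ5 hbig4) (ENNReal.ofReal_le_ofReal ?_)
      nlinarith
    · -- small slope : the set lives far away
      have hb3 : 3/5 ≤ |b| := by
        nlinarith [abs_nonneg b, sq_abs b, norm_nonneg w]
      have hpt : ∀ x : EuclideanSpace ℝ (Fin d),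
          (if |(inner ℝ w x : ℝ) + b| ≤ δ*(1+‖x‖) then
            ENNReal.ofReal ((1+‖x‖^2) ^ (-(((d:ℝ)+1+ε)/2))) else 0)
          ≤ ENNReal.ofReal (13*δ) * ENNReal.ofReal ((1+‖x‖^2) ^ (-(((d:ℝ)+ε)/2))) := by
        intro x
        by_cases hc : |(inner ℝ w x : ℝ) + b| ≤ δ*(1+‖x‖)
        · rw [if_pos hc, ← ENNReal.ofReal_mul (by positivity)]
          apply ENNReal.ofReal_le_ofReal
          have hwx : |(inner ℝ w x : ℝ)| ≤ ‖w‖*‖x‖ := abs_real_inner_le_norm w x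
          have hbb : |b| ≤ |(inner ℝ w x : ℝ) + b| + |(inner ℝ w x : ℝ)| := by
            calc |b| = |((inner ℝ w x : ℝ) + b) + (-(inner ℝ w x : ℝ))| := by congr 1; ring
              _ ≤ |(inner ℝ w x : ℝ) + b| + |(-(inner ℝ w x : ℝ))| := abs_add_le _ _
              _ = |(inner ℝ w x : ℝ) + b| + |(inner ℝ w x : ℝ)| := by rw [abs_neg]
          have h13 : 1 ≤ 13*δ*‖x‖ := by
            nlinarith [norm_nonneg x, mul_le_mul_of_nonneg_right hsmall.le (norm_nonneg x)]
          have hnn : (0:ℝ) ≤ (1+‖x‖^2) ^ (-(((d:ℝ)+1+ε)/2)) :=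
            Real.rpow_nonneg (by positivity) _
          have hxle : ‖x‖ ≤ (1+‖x‖^2:ℝ) ^ ((1:ℝ)/2) := by
            rw [← Real.sqrt_eq_rpow]
            have h := Real.sqrt_le_sqrt (show ‖x‖^2 ≤ 1+‖x‖^2 by linarith)
            rwa [Real.sqrt_sq (norm_nonneg x)] at h
          calc (1+‖x‖^2) ^ (-(((d:ℝ)+1+ε)/2))
              ≤ (13*δ*‖x‖) * ((1+‖x‖^2) ^ (-(((d:ℝ)+1+ε)/2))) :=
                le_mul_of_one_le_left hnn h13
            _ ≤ (13*δ) * ((1+‖x‖^2) ^ ((1:ℝ)/2) * (1+‖x‖^2) ^ (-(((d:ℝ)+1+ε)/2))) := by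
                have := mul_le_mul_of_nonneg_right hxle hnn
                nlinarith [mul_le_mul_of_nonneg_left this (show (0:ℝ) ≤ 13*δ by positivity)]
            _ = (13*δ) * ((1+‖x‖^2) ^ ((1:ℝ)/2 + -(((d:ℝ)+1+ε)/2))) := by
                rw [← Real.rpow_add (by positivity)]
            _ = (13*δ) * ((1+‖x‖^2) ^ (-(((d:ℝ)+ε)/2))) := by
                rw [show (1:ℝ)/2 + -(((d:ℝ)+1+ε)/2) = -(((d:ℝ)+ε)/2) by ring]
        · rw [if_neg hc]; exact zero_le
      refine le_trans (lintegral_mono hpt) ?_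
      rw [lintegral_const_mul' _ _ ENNReal.ofReal_ne_top]
      calc ENNReal.ofReal (13*δ) * ∫⁻ x : EuclideanSpace ℝ (Fin d),
            ENNReal.ofReal ((1+‖x‖^2) ^ (-(((d:ℝ)+ε)/2)))
          ≤ ENNReal.ofReal (13*δ) * ENNReal.ofReal J4 := by
            apply mul_le_mul_right
            rw [hJ4def, ENNReal.ofReal_toReal hJ4fin.ne]
        _ = ENNReal.ofReal (13*δ*J4) := by rw [← ENNReal.ofReal_mul (by positivity)]
        _ ≤ ENNReal.ofReal ((Kb + 5*(mass+1) + 13*(J4+1)) * δ) := by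
            apply ENNReal.ofReal_le_ofReal
            nlinarith
  · -- large δ : use the total mass
    have hpt : ∀ x : EuclideanSpace ℝ (Fin d),
        (if |(inner ℝ w x : ℝ) + b| ≤ δ*(1+‖x‖) then
          ENNReal.ofReal ((1+‖x‖^2) ^ (-(((d:ℝ)+1+ε)/2))) else 0)
        ≤ ENNReal.ofReal ((1+‖x‖^2) ^ (-(((d:ℝ)+1+ε)/2))) := by
      intro x
      by_cases hc : |(inner ℝ w x : ℝ) + b| ≤ δ*(1+‖x‖)
      · rw [if_pos hc]
      · rw [if_neg hc]; exact zero_le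
    refine le_trans (lintegral_mono hpt) ?_
    calc ∫⁻ x : EuclideanSpace ℝ (Fin d), ENNReal.ofReal ((1+‖x‖^2) ^ (-(((d:ℝ)+1+ε)/2)))
        = ENNReal.ofReal mass := by rw [hmassdef, ENNReal.ofReal_toReal hmassfin.ne]
      _ ≤ ENNReal.ofReal ((Kb + 5*(mass+1) + 13*(J4+1)) * δ) := by
          apply ENNReal.ofReal_le_ofReal
          nlinarith
end HSLip

set_option maxHeartbeats 1000000 in
/-- If `ρ(x) ≤ C(1+|x|²)^{-(d+2+ε)/2}`, then for the data distribution
`P̄ = ρ·dx` the map `(w,b) ↦ 1_{{wᵀx+b>0}}` from `S^d ⊂ ℝ^d × ℝ` to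
`L¹(√(1+|x|²)·P̄)` is Lipschitz continuous. -/
theorem halfspace_indicator_lipschitz (d : ℕ) (ρ : EuclideanSpace ℝ (Fin d) → ℝ)
    (hρmeas : Measurable ρ) (hρpos : ∀ x, 0 ≤ ρ x)
    (C ε : ℝ) (hC : 0 < C) (hε : 0 < ε)
    (hdecay : ∀ x, ρ x ≤ C * (1 + ‖x‖ ^ 2) ^ (-((d : ℝ) + 2 + ε) / 2)) :
    ∃ L > 0, ∀ (w w' : EuclideanSpace ℝ (Fin d)) (b b' : ℝ),
      ‖w‖ ^ 2 + b ^ 2 = 1 → ‖w'‖ ^ 2 + b' ^ 2 = 1 →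
      ∫ x, |Set.indicator {x : EuclideanSpace ℝ (Fin d) | inner ℝ w x + b > 0}
              (fun _ => (1 : ℝ)) x
            - Set.indicator {x : EuclideanSpace ℝ (Fin d) | inner ℝ w' x + b' > 0}
              (fun _ => (1 : ℝ)) x|
          * Real.sqrt (1 + ‖x‖ ^ 2) * ρ x
        ≤ L * (‖w - w'‖ + |b - b'|) := by
  obtain ⟨K, hK0, hK⟩ := HSLip.key d hε
  refine ⟨C*K, by positivity, ?_⟩
  intro w w' b b' hw hw'
  set f : EuclideanSpace ℝ (Fin d) → ℝ := fun x =>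
    |Set.indicator {x : EuclideanSpace ℝ (Fin d) | inner ℝ w x + b > 0} (fun _ => (1 : ℝ)) x
      - Set.indicator {x : EuclideanSpace ℝ (Fin d) | inner ℝ w' x + b' > 0} (fun _ => (1 : ℝ)) x|
      * Real.sqrt (1 + ‖x‖ ^ 2) * ρ x with hfdef
  rcases eq_or_lt_of_le (show (0:ℝ) ≤ ‖w - w'‖ + |b - b'| by positivity) with hδ0 | hδpos
  · -- the two functionals coincide
    have h1 : ‖w - w'‖ = 0 := by
      have := abs_nonneg (b - b')
      have := norm_nonneg (w - w')
      linarith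
    have h2 : |b - b'| = 0 := by
      have := norm_nonneg (w - w')
      linarith
    have hww : w = w' := sub_eq_zero.mp (norm_eq_zero.mp h1)
    have hbb : b = b' := sub_eq_zero.mp (abs_eq_zero.mp h2)
    have hfzero : ∀ x, f x = 0 := by
      intro x
      rw [hfdef]
      simp [hww, hbb]
    have : ∫ x, f x = 0 := by
      rw [funext hfzero]
      exact integral_zero _ _
    rw [this]
    positivity
  · -- pointwise domination and the key estimate
    have hfm : AEStronglyMeasurable f volume := by
      have hA : MeasurableSet {x : EuclideanSpace ℝ (Fin d) | inner ℝ w x + b > 0} := by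
        have hcont : Continuous fun x : EuclideanSpace ℝ (Fin d) => (inner ℝ w x : ℝ) + b :=
          (continuous_const.inner continuous_id).add continuous_const
        exact (isOpen_lt continuous_const hcont).measurableSet
      have hA' : MeasurableSet {x : EuclideanSpace ℝ (Fin d) | inner ℝ w' x + b' > 0} := by
        have hcont : Continuous fun x : EuclideanSpace ℝ (Fin d) => (inner ℝ w' x : ℝ) + b' :=
          (continuous_const.inner continuous_id).add continuous_const
        exact (isOpen_lt continuous_const hcont).measurableSet
      have hsq : Measurable fun x : EuclideanSpace ℝ (Fin d) => Real.sqrt (1 + ‖x‖ ^ 2) :=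
        (Real.continuous_sqrt.comp (continuous_const.add (continuous_norm.pow 2))).measurable
      exact ((((measurable_const.indicator hA).sub
        (measurable_const.indicator hA')).abs.mul hsq).mul hρmeas).aestronglyMeasurable
    have hf0 : 0 ≤ᵐ[volume] f := Filter.Eventually.of_forall fun x => by
      rw [hfdef]
      have := hρpos x
      positivity
    rw [integral_eq_lintegral_of_nonneg_ae hf0 hfm]
    have hpt : ∀ x : EuclideanSpace ℝ (Fin d), ENNReal.ofReal (f x)
        ≤ ENNReal.ofReal C * (if |(inner ℝ w x : ℝ) + b| ≤ (‖w - w'‖ + |b - b'|)*(1+‖x‖) then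
            ENNReal.ofReal ((1+‖x‖^2) ^ (-(((d:ℝ)+1+ε)/2))) else 0) := by
      intro x
      by_cases hc : |(inner ℝ w x : ℝ) + b| ≤ (‖w - w'‖ + |b - b'|)*(1+‖x‖)
      · rw [if_pos hc, ← ENNReal.ofReal_mul hC.le]
        apply ENNReal.ofReal_le_ofReal
        have hind : |Set.indicator {x : EuclideanSpace ℝ (Fin d) | inner ℝ w x + b > 0}
            (fun _ => (1 : ℝ)) x - Set.indicator {x : EuclideanSpace ℝ (Fin d) | inner ℝ w' x + b' > 0}
            (fun _ => (1 : ℝ)) x| ≤ 1 := by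
          have h1v : ∀ (s : Set (EuclideanSpace ℝ (Fin d))),
              Set.indicator s (fun _ => (1:ℝ)) x = 0 ∨ Set.indicator s (fun _ => (1:ℝ)) x = 1 := by
            intro s
            by_cases h : x ∈ s
            · right; exact Set.indicator_of_mem h _
            · left; exact Set.indicator_of_notMem h _
          rcases h1v {x : EuclideanSpace ℝ (Fin d) | inner ℝ w x + b > 0} with h1 | h1 <;>
            rcases h1v {x : EuclideanSpace ℝ (Fin d) | inner ℝ w' x + b' > 0} with h2 | h2 <;>
            rw [h1, h2] <;> norm_num
        have hwt : Real.sqrt (1 + ‖x‖ ^ 2) * ρ x ≤ C * (1+‖x‖^2) ^ (-(((d:ℝ)+1+ε)/2)) := by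
          have hd := hdecay x
          have hsqrt : Real.sqrt (1 + ‖x‖ ^ 2) = (1 + ‖x‖ ^ 2:ℝ) ^ ((1:ℝ)/2) :=
            Real.sqrt_eq_rpow _
          calc Real.sqrt (1 + ‖x‖ ^ 2) * ρ x
              ≤ (1 + ‖x‖ ^ 2) ^ ((1:ℝ)/2) * (C * (1 + ‖x‖ ^ 2) ^ (-((d : ℝ) + 2 + ε) / 2)) := by
                rw [hsqrt]
                exact mul_le_mul_of_nonneg_left hd (Real.rpow_nonneg (by positivity) _)
            _ = C * ((1 + ‖x‖ ^ 2) ^ ((1:ℝ)/2) * (1 + ‖x‖ ^ 2) ^ (-((d : ℝ) + 2 + ε) / 2)) := by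
                ring
            _ = C * (1 + ‖x‖ ^ 2) ^ ((1:ℝ)/2 + -((d : ℝ) + 2 + ε) / 2) := by
                rw [← Real.rpow_add (by positivity)]
            _ = C * (1+‖x‖^2) ^ (-(((d:ℝ)+1+ε)/2)) := by
                rw [show (1:ℝ)/2 + -((d : ℝ) + 2 + ε) / 2 = -(((d:ℝ)+1+ε)/2) by ring]
        have hrr : (0:ℝ) ≤ Real.sqrt (1 + ‖x‖ ^ 2) * ρ x := by
          have := hρpos x
          positivity
        calc f x = |Set.indicator {x : EuclideanSpace ℝ (Fin d) | inner ℝ w x + b > 0}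
              (fun _ => (1 : ℝ)) x - Set.indicator {x : EuclideanSpace ℝ (Fin d) | inner ℝ w' x + b' > 0}
              (fun _ => (1 : ℝ)) x| * (Real.sqrt (1 + ‖x‖ ^ 2) * ρ x) := by
              rw [hfdef]; ring
          _ ≤ 1 * (Real.sqrt (1 + ‖x‖ ^ 2) * ρ x) := mul_le_mul_of_nonneg_right hind hrr
          _ = Real.sqrt (1 + ‖x‖ ^ 2) * ρ x := one_mul _
          _ ≤ C * (1+‖x‖^2) ^ (-(((d:ℝ)+1+ε)/2)) := hwt
      · rw [if_neg hc]
        push_neg at hc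
        have hdiff : |((inner ℝ w x : ℝ) + b) - ((inner ℝ w' x : ℝ) + b')|
            ≤ (‖w - w'‖ + |b - b'|)*(1+‖x‖) := by
          have he : ((inner ℝ w x : ℝ) + b) - ((inner ℝ w' x : ℝ) + b')
              = (inner ℝ (w - w') x : ℝ) + (b - b') := by
            rw [inner_sub_left]; ring
          rw [he]
          calc |(inner ℝ (w - w') x : ℝ) + (b - b')|
              ≤ |(inner ℝ (w - w') x : ℝ)| + |b - b'| := abs_add_le _ _
            _ ≤ ‖w - w'‖*‖x‖ + |b - b'| := by
                have := abs_real_inner_le_norm (w - w') x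
                linarith
            _ ≤ (‖w - w'‖ + |b - b'|)*(1+‖x‖) := by
                nlinarith [norm_nonneg x, norm_nonneg (w - w'), abs_nonneg (b - b')]
        have hiff : (0 < (inner ℝ w x : ℝ) + b) ↔ (0 < (inner ℝ w' x : ℝ) + b') := by
          have h5 := abs_le.mp hdiff
          constructor
          · intro h
            rw [abs_of_pos h] at hc
            linarith
          · intro h
            by_contra hnot
            push_neg at hnot
            rw [abs_of_nonpos hnot] at hc
            linarith
        have heq : Set.indicator {x : EuclideanSpace ℝ (Fin d) | inner ℝ w x + b > 0}
            (fun _ => (1 : ℝ)) x = Set.indicator {x : EuclideanSpace ℝ (Fin d) | inner ℝ w' x + b' > 0}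
            (fun _ => (1 : ℝ)) x := by
          by_cases hmem : (0:ℝ) < (inner ℝ w x : ℝ) + b
          · rw [Set.indicator_of_mem (by exact hmem), Set.indicator_of_mem (by exact hiff.mp hmem)]
          · rw [Set.indicator_of_notMem (by exact hmem),
              Set.indicator_of_notMem (by exact fun h => hmem (hiff.mpr h))]
        have : f x = 0 := by
          rw [hfdef]
          simp only [heq, sub_self, abs_zero, zero_mul]
        rw [this]
        simp
    have hlint : ∫⁻ x, ENNReal.ofReal (f x)
        ≤ ENNReal.ofReal C * ENNReal.ofReal (K * (‖w - w'‖ + |b - b'|)) := by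
      refine le_trans (lintegral_mono hpt) ?_
      rw [lintegral_const_mul' _ _ ENNReal.ofReal_ne_top]
      exact mul_le_mul_right (hK w b (‖w - w'‖ + |b - b'|) hw hδpos) _
    have hfin : ENNReal.ofReal C * ENNReal.ofReal (K * (‖w - w'‖ + |b - b'|))
        = ENNReal.ofReal (C * (K * (‖w - w'‖ + |b - b'|))) := by
      rw [← ENNReal.ofReal_mul hC.le]
    rw [hfin] at hlint
    calc (∫⁻ x, ENNReal.ofReal (f x)).toReal
        ≤ (ENNReal.ofReal (C * (K * (‖w - w'‖ + |b - b'|)))).toReal :=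
          ENNReal.toReal_mono ENNReal.ofReal_ne_top hlint
      _ = C * (K * (‖w - w'‖ + |b - b'|)) := by
          rw [ENNReal.toReal_ofReal (by positivity)]
      _ = C * K * (‖w - w'‖ + |b - b'|) := by ring
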